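/- arXiv:2105.02099 — 4 statements merged into one kernel-verified Lean document; each statement's English description precedes it below -/
import Mathlib

section
/- In a decreasing CMDP, iterating the functional 𝓕 on the initial vector x_T reaches a fixed point after at most n steps, where n is the length of the longest simple path in the CMDP, and this fixed point equals the minimal-load vector for the sure non-reloading reachability objective 𝖱𝖾𝖺𝖼𝗁_T = ⋃_i 𝖱𝖾𝖺𝖼𝗁ᵀⁱ. -/
open Classical

/-- A consumption Markov decision process. -/
structure CMDP (S A : Type) [Fintype S] [Fintype A] where
  /-- transition function -/
  δ : S → A → S → NNReal
  δ_sum : ∀ s a, ∑ t, δ s a t = 1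
  /-- consumption function -/
  γ : S → A → ℕ
  /-- reload states -/
  R : Finset S
  /-- capacity -/
  cap : ℕ

namespace CMDP

variable {S A : Type} [Fintype S] [Fintype A] [DecidableEq S] [DecidableEq A]

/-- successors with positive transition probability -/
noncomputable def Succ (M : CMDP S A) (s : S) (a : A) : Finset S :=
  Finset.univ.filter (fun t => 0 < M.δ s a t)

/-- A (history-dependent) strategy: takes the initial load, the history
(list of state-action steps performed so far) and the current state. -/
def Strat (S A : Type) := ℕ → List (S × A) → S → A

/-- An infinite run: a sequence of states and actions. -/
structure Run (S A : Type) where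
  st : ℕ → S
  ac : ℕ → A

/-- the history (list of steps) formed by the first `i` steps of a run -/
def hist (ρ : Run S A) (i : ℕ) : List (S × A) :=
  (List.range i).map (fun j => (ρ.st j, ρ.ac j))

/-- a run is compatible with strategy `σ` under initial load `d` -/
def Compatible (M : CMDP S A) (σ : Strat S A) (d : ℕ) (ρ : Run S A) : Prop :=
  ∀ i, ρ.ac i = σ d (hist ρ i) (ρ.st i) ∧ 0 < M.δ (ρ.st i) (ρ.ac i) (ρ.st (i+1))

/-- one step of the resource-level evolution; `none` is ⊥ (exhaustion) -/
def nextLevel (M : CMDP S A) (s : S) (a : A) : Option ℕ → Option ℕ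
  | none => none
  | some l =>
      if s ∈ M.R then (if M.γ s a ≤ M.cap then some (M.cap - M.γ s a) else none)
      else (if M.γ s a ≤ l then some (l - M.γ s a) else none)

/-- resource levels along a path, starting from initial load `d` -/
def levels (M : CMDP S A) (d : ℕ) (st : ℕ → S) (ac : ℕ → A) : ℕ → Option ℕ
  | 0 => some d
  | i+1 => M.nextLevel (st i) (ac i) (levels M d st ac i)

/-- a run loaded with `d` is safe: ⊥ never occurs among the resource levels -/
def SafeRun (M : CMDP S A) (d : ℕ) (ρ : Run S A) : Prop :=
  ∀ i, levels M d ρ.st ρ.ac i ≠ none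

/-- all `σ`-compatible runs from `s` loaded with `d` are safe -/
def AllSafe (M : CMDP S A) (σ : Strat S A) (s : S) (d : ℕ) : Prop :=
  ∀ ρ : Run S A, Compatible M σ d ρ → ρ.st 0 = s → SafeRun M d ρ

/-- the resource level after a finite history -/
def levelOfHist (M : CMDP S A) (d : ℕ) (h : List (S × A)) : Option ℕ :=
  h.foldl (fun r p => M.nextLevel p.1 p.2 r) (some d)

/-- action value of `a` in `s` based on vector `v` -/
noncomputable def AV (M : CMDP S A) (v : S → ℕ∞) (s : S) (a : A) : ℕ∞ :=
  (M.γ s a : ℕ∞) + (M.Succ s a).sup v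

/-- the Bellman-style functional 𝓕 -/
noncomputable def Ffun (M : CMDP S A) (T : Finset S) (v : S → ℕ∞) : S → ℕ∞ :=
  fun s => if s ∈ T then 0 else Finset.univ.inf (fun a => M.AV v s a)

/-- the initial vector `x_T`: 0 on `T` and ∞ elsewhere -/
noncomputable def xT (T : Finset S) : S → ℕ∞ := fun s => if s ∈ T then 0 else ⊤

/-- truncation to zero on `T` -/
noncomputable def trunc0 (T : Finset S) (v : S → ℕ∞) : S → ℕ∞ :=
  fun s => if s ∈ T then 0 else v s

/-- the functional 𝓖 (for reachability in at least one step) -/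
noncomputable def Gfun (M : CMDP S A) (T : Finset S) (v : S → ℕ∞) : S → ℕ∞ :=
  fun s => Finset.univ.inf (fun a => M.AV (trunc0 T v) s a)

/-- bounded non-reloading reachability objective `Reach_T^i` -/
def NRReachB (M : CMDP S A) (T : Finset S) (i : ℕ) (d : ℕ) (ρ : Run S A) : Prop :=
  ∃ f ≤ i, ρ.st f ∈ T ∧ (∑ j ∈ Finset.range f, M.γ (ρ.st j) (ρ.ac j)) ≤ d

/-- non-reloading reachability objective -/
def NRReach (M : CMDP S A) (T : Finset S) (d : ℕ) (ρ : Run S A) : Prop :=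
  ∃ i, NRReachB M T i d ρ

/-- non-reloading reachability in at least one step -/
def NRReachPlus (M : CMDP S A) (T : Finset S) (d : ℕ) (ρ : Run S A) : Prop :=
  ∃ f, 1 ≤ f ∧ ρ.st f ∈ T ∧ (∑ j ∈ Finset.range f, M.γ (ρ.st j) (ρ.ac j)) ≤ d

/-- sure satisfaction of an objective from `s` loaded with `d` -/
def SureSat (M : CMDP S A) (σ : Strat S A) (s : S) (d : ℕ)
    (O : ℕ → Run S A → Prop) : Prop :=
  ∀ ρ, Compatible M σ d ρ → ρ.st 0 = s → O d ρ

/-- a vector of loads is sufficient for surely satisfying an objective -/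
def SatVec (M : CMDP S A) (O : ℕ → Run S A → Prop) (x : S → ℕ∞) : Prop :=
  ∃ σ : Strat S A, ∀ s (d : ℕ), x s = (d : ℕ∞) → SureSat M σ s d O

/-- `x` is the componentwise-minimal vector satisfying `Sat` -/
def IsML {S : Type} (Sat : (S → ℕ∞) → Prop) (x : S → ℕ∞) : Prop :=
  Sat x ∧ ∀ y, Sat y → x ≤ y

/-- a vector of loads is sufficient for safety -/
def SafetySat (M : CMDP S A) (x : S → ℕ∞) : Prop :=
  ∃ σ : Strat S A, ∀ s (d : ℕ), x s = (d : ℕ∞) → AllSafe M σ s d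

/-- a decreasing CMDP: every cycle contains a positive-consumption transition -/
def Decreasing (M : CMDP S A) : Prop :=
  ∀ (n : ℕ) (st : ℕ → S) (ac : ℕ → A), 0 < n →
    (∀ i < n, 0 < M.δ (st i) (ac i) (st (i+1))) → st 0 = st n →
    ∃ i < n, 0 < M.γ (st i) (ac i)

/-- a valid finite path of length `n` -/
def ValidPath (M : CMDP S A) (n : ℕ) (st : ℕ → S) (ac : ℕ → A) : Prop :=
  ∀ i < n, 0 < M.δ (st i) (ac i) (st (i+1))

/-- a simple path: no proper infix forms a cycle -/
def SimplePath (M : CMDP S A) (n : ℕ) (st : ℕ → S) (ac : ℕ → A) : Prop :=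
  ValidPath M n st ac ∧ ∀ i j, i < j → j ≤ n → st i = st j → i = 0 ∧ j = n

/-- probability, under strategy `σ` with load `d` and past history `h`, that the
next `n` steps (states s₁ … s_{n+1}) avoid `T`. -/
noncomputable def probAvoid (M : CMDP S A) (T : Finset S) (σ : Strat S A) (d : ℕ) :
    ℕ → List (S × A) → S → NNReal
  | 0, _, s => if s ∈ T then 0 else 1
  | n+1, h, s =>
      if s ∈ T then 0 else
      ∑ t, M.δ s (σ d h s) t * probAvoid M T σ d n (h ++ [(s, σ d h s)]) t

/-- probability, under strategy `σ` with load `d` and past history `h`, that the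
next `n` steps contain fewer than `k` visits to `T`. -/
noncomputable def probFew (M : CMDP S A) (T : Finset S) (σ : Strat S A) (d : ℕ) :
    ℕ → ℕ → List (S × A) → S → NNReal
  | 0, k, _, s => if k ≤ (if s ∈ T then 1 else 0) then 0 else 1
  | n+1, k, h, s =>
      if k ≤ (if s ∈ T then 1 else 0) then 0 else
      ∑ t, M.δ s (σ d h s) t *
        probFew M T σ d n (k - (if s ∈ T then 1 else 0)) (h ++ [(s, σ d h s)]) t

/-- hope value of successor `s'` for `a` in `s`, based on `x` and safety vector `mlS` -/
noncomputable def HV (M : CMDP S A) (mlS : S → ℕ∞) (x : S → ℕ∞)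
    (s : S) (a : A) (s' : S) : ℕ∞ :=
  max (x s') (((M.Succ s a).erase s').sup mlS)

/-- safe value of `a` in `s` based on `x` and safety vector `mlS` -/
noncomputable def SV (M : CMDP S A) (mlS : S → ℕ∞) (x : S → ℕ∞) (s : S) (a : A) : ℕ∞ :=
  (M.γ s a : ℕ∞) + (M.Succ s a).inf (fun s' => HV M mlS x s a s')

/-- thresholded safe value: only successors with probability at least `θ` count -/
noncomputable def SVθ (M : CMDP S A) (mlS : S → ℕ∞) (θ : NNReal) (x : S → ℕ∞)
    (s : S) (a : A) : ℕ∞ :=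
  (M.γ s a : ℕ∞) +
    ((M.Succ s a).filter (fun s' => θ ≤ M.δ s a s')).inf (fun s' => HV M mlS x s a s')

/-- the truncation operator ⌈·⌉_{R'}^{cap} -/
noncomputable def truncRset (M : CMDP S A) (R' : Finset S) (x : S → ℕ∞) : S → ℕ∞ :=
  fun s => if (M.cap : ℕ∞) < x s then ⊤ else if s ∈ R' then 0 else x s

/-- the functional 𝓐 -/
noncomputable def Afun (M : CMDP S A) (T : Finset S) (mlS : S → ℕ∞)
    (x : S → ℕ∞) : S → ℕ∞ :=
  fun s => if s ∈ T then mlS s else Finset.univ.inf (fun a => SV M mlS x s a)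

/-- the operator 𝓑 = ⌈𝓐(·)⌉_R^cap -/
noncomputable def Bfun (M : CMDP S A) (T : Finset S) (mlS : S → ℕ∞)
    (x : S → ℕ∞) : S → ℕ∞ :=
  truncRset M M.R (Afun M T mlS x)

/-- the thresholded functional 𝓐_θ -/
noncomputable def Aθfun (M : CMDP S A) (T : Finset S) (mlS : S → ℕ∞) (θ : NNReal)
    (x : S → ℕ∞) : S → ℕ∞ :=
  fun s => if s ∈ T then mlS s else Finset.univ.inf (fun a => SVθ M mlS θ x s a)

/-- the thresholded operator 𝓑_θ -/
noncomputable def Bθfun (M : CMDP S A) (T : Finset S) (mlS : S → ℕ∞) (θ : NNReal)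
    (x : S → ℕ∞) : S → ℕ∞ :=
  truncRset M M.R (Aθfun M T mlS θ x)

/-- the initial vector `y_T`: `mlS` on `T` and ∞ elsewhere -/
noncomputable def yT (M : CMDP S A) (T : Finset S) (mlS : S → ℕ∞) : S → ℕ∞ :=
  fun s => if s ∈ T then mlS s else ⊤

/-- a vector of loads suffices for safely reaching `T` within `i` steps with
positive probability -/
def PosReachSatB (M : CMDP S A) (T : Finset S) (i : ℕ) (x : S → ℕ∞) : Prop :=
  ∃ σ : Strat S A, ∀ s (d : ℕ), x s = (d : ℕ∞) →
    AllSafe M σ s d ∧ probAvoid M T σ d i [] s < 1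

/-- a vector of loads suffices for safely reaching `T` with positive probability -/
def PosReachSat (M : CMDP S A) (T : Finset S) (x : S → ℕ∞) : Prop :=
  ∃ σ : Strat S A, ∀ s (d : ℕ), x s = (d : ℕ∞) →
    AllSafe M σ s d ∧ ∃ i, probAvoid M T σ d i [] s < 1

/-- a vector of loads suffices for safely reaching `T` almost surely -/
def ASReachSat (M : CMDP S A) (T : Finset S) (x : S → ℕ∞) : Prop :=
  ∃ σ : Strat S A, ∀ s (d : ℕ), x s = (d : ℕ∞) →
    d ≤ M.cap ∧ AllSafe M σ s d ∧ (⨅ n, probAvoid M T σ d n [] s) = 0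

/-- a vector of loads suffices for safely visiting `T` infinitely often a.s. -/
def ASBuchiSat (M : CMDP S A) (T : Finset S) (x : S → ℕ∞) : Prop :=
  ∃ σ : Strat S A, ∀ s (d : ℕ), x s = (d : ℕ∞) →
    d ≤ M.cap ∧ AllSafe M σ s d ∧ ∀ k : ℕ, (⨅ n, probFew M T σ d n k [] s) = 0

/-- a safe action in `s` with resource level `l` (w.r.t. the safety vector `mlS`) -/
def SafeAct (M : CMDP S A) (mlS : S → ℕ∞) (s : S) (l : ℕ) (a : A) : Prop :=
  AV M mlS s a ≤ (l : ℕ∞) ∨ (AV M mlS s a ≤ (M.cap : ℕ∞) ∧ s ∈ M.R) ∨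
    (M.cap : ℕ∞) < mlS s

/-- a safe strategy picks a safe action whenever one exists -/
def SafeStrat (M : CMDP S A) (mlS : S → ℕ∞) (σ : Strat S A) : Prop :=
  ∀ (d : ℕ) (h : List (S × A)) (s : S) (l : ℕ), levelOfHist M d h = some l →
    (∃ a, SafeAct M mlS s l a) → SafeAct M mlS s l (σ d h s)

/-- the CMDP `C(R')`: as `M`, but with reload set `R'` -/
def withReloads (M : CMDP S A) (R' : Finset S) : CMDP S A :=
  { M with R := R' }

/-- a finite-memory strategy -/
def FiniteMemory (σ : Strat S A) : Prop :=
  ∃ (Mem : Type) (_ : Finite Mem) (upd : Mem → S × A → Mem) (m0 : ℕ → Mem)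
    (out : Mem → S → A), ∀ d h s, σ d h s = out (h.foldl upd (m0 d)) s

/-- the modified CMDP C→T with a fresh absorbing reload state `sink = none` -/
noncomputable def toSink (M : CMDP S A) (T : Finset S) (mlS : S → ℕ∞) :
    CMDP (Option S) A where
  δ := fun s a t =>
    match s with
    | none => if t = none then 1 else 0
    | some s' =>
        if s' ∈ T then (if t = none then 1 else 0)
        else (match t with
              | none => 0
              | some t' => M.δ s' a t')
  δ_sum := by
    intro s a
    cases s with
    | none => simp [Fintype.sum_option]
    | some s' =>
        by_cases hs : s' ∈ T
        · simp [hs, Fintype.sum_option]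
        · simp [hs, Fintype.sum_option, M.δ_sum]
  γ := fun s a =>
    match s with
    | none => 1
    | some s' =>
        if s' ∈ T then (if mlS s' = ⊤ then M.cap + 1 else (mlS s').toNat)
        else M.γ s' a
  R := insert none (M.R.image some)
  cap := M.cap

end CMDP

section Aux

set_option linter.unusedSectionVars false
set_option linter.unusedVariables false

open CMDP

variable {S A : Type} [Fintype S] [Fintype A] [DecidableEq S] [DecidableEq A]

lemma succ_nonempty (M : CMDP S A) (s : S) (a : A) : (M.Succ s a).Nonempty := by
  by_contra h
  rw [Finset.not_nonempty_iff_eq_empty] at h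
  have h0 : ∀ t, M.δ s a t = 0 := by
    intro t
    by_contra ht
    have : t ∈ M.Succ s a := by
      simp [CMDP.Succ, pos_iff_ne_zero, ht]
    simp [h] at this
  have := M.δ_sum s a
  simp [h0] at this

lemma mem_succ {M : CMDP S A} {s : S} {a : A} {t : S} :
    t ∈ M.Succ s a ↔ 0 < M.δ s a t := by
  simp [CMDP.Succ]

lemma Ffun_mono (M : CMDP S A) (T : Finset S) {v w : S → ℕ∞} (h : v ≤ w) :
    Ffun M T v ≤ Ffun M T w := by
  intro s
  unfold Ffun
  by_cases hs : s ∈ T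
  · simp [hs]
  · simp only [hs, if_false]
    refine Finset.inf_mono_fun fun a _ => ?_
    exact add_le_add_right (Finset.sup_mono_fun fun t _ => h t) _

lemma Ffun_monotone (M : CMDP S A) (T : Finset S) : Monotone (Ffun M T) :=
  fun _ _ h => Ffun_mono M T h

lemma iter_succ_le (M : CMDP S A) (T : Finset S) (k : ℕ) :
    (Ffun M T)^[k+1] (xT T) ≤ (Ffun M T)^[k] (xT T) := by
  rw [Function.iterate_succ_apply]
  refine (Ffun_monotone M T).iterate k ?_
  intro s
  unfold Ffun xT
  by_cases hs : s ∈ T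
  · simp [hs]
  · simp [hs]

lemma iter_anti (M : CMDP S A) (T : Finset S) {m k : ℕ} (h : m ≤ k) :
    (Ffun M T)^[k] (xT T) ≤ (Ffun M T)^[m] (xT T) := by
  induction k with
  | zero => simp_all
  | succ k ih =>
      rcases Nat.lt_or_ge m (k+1) with hm | hm
      · exact (iter_succ_le M T k).trans (ih (Nat.lt_succ_iff.mp hm))
      · have : m = k + 1 := le_antisymm h hm
        subst this; exact le_rfl

lemma iter_T (M : CMDP S A) (T : Finset S) (k : ℕ) {s : S} (hs : s ∈ T) :
    (Ffun M T)^[k] (xT T) s = 0 := by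
  cases k with
  | zero => simp [xT, hs]
  | succ k => rw [Function.iterate_succ_apply']; simp [Ffun, hs]

lemma exists_stab (M : CMDP S A) (T : Finset S) :
    ∃ K, ∀ m, K ≤ m → (Ffun M T)^[m] (xT T) = (Ffun M T)^[K] (xT T) := by
  have key : ∀ s : S, ∃ N, ∀ m, N ≤ m →
      (Ffun M T)^[m] (xT T) s = (Ffun M T)^[N] (xT T) s := by
    intro s
    obtain ⟨x, hx, hmin⟩ := (wellFounded_lt (α := ℕ∞)).has_min
      (Set.range fun k => (Ffun M T)^[k] (xT T) s) ⟨_, 0, rfl⟩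
    obtain ⟨N, rfl⟩ := hx
    refine ⟨N, fun m hm => ?_⟩
    have h1 : (Ffun M T)^[m] (xT T) s ≤ (Ffun M T)^[N] (xT T) s := iter_anti M T hm s
    have h2 := hmin _ ⟨m, rfl⟩
    exact le_antisymm h1 (not_lt.mp h2)
  choose N hN using key
  refine ⟨Finset.univ.sup N, fun m hm => funext fun s => ?_⟩
  have h1 : N s ≤ Finset.univ.sup N := Finset.le_sup (Finset.mem_univ s)
  rw [hN s m (h1.trans hm), hN s _ h1]

/-! ### fixed point step properties -/

lemma sup_add_le_of {F : Finset S} (hF : F.Nonempty) {c D : ℕ∞} {f : S → ℕ∞}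
    (h : ∀ t ∈ F, c + f t ≤ D) : c + F.sup f ≤ D := by
  obtain ⟨t0, ht0, hsup⟩ := F.exists_mem_eq_sup hF f
  rw [hsup]; exact h t0 ht0

lemma fix_T {M : CMDP S A} {T : Finset S} {v : S → ℕ∞} (hv : Ffun M T v = v)
    {s : S} (hs : s ∈ T) : v s = 0 := by
  conv_lhs => rw [← hv]
  simp [Ffun, hs]

lemma fix_step [Nonempty A] {M : CMDP S A} {T : Finset S} {v : S → ℕ∞}
    (hv : Ffun M T v = v) {s : S} (hs : s ∉ T) :
    ∃ a : A, v s = (M.γ s a : ℕ∞) + (M.Succ s a).sup v := by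
  obtain ⟨a, _, ha⟩ := Finset.exists_mem_eq_inf Finset.univ Finset.univ_nonempty
    (fun a => M.AV v s a)
  refine ⟨a, ?_⟩
  conv_lhs => rw [← hv]
  simp only [Ffun, hs, if_false]
  rw [ha]; rfl

/-! ### building runs extending a consistent finite history -/

noncomputable def pickSucc (M : CMDP S A) (u : S) (a : A) : S :=
  (succ_nonempty M u a).choose

lemma pickSucc_pos (M : CMDP S A) (u : S) (a : A) :
    0 < M.δ u a (pickSucc M u a) :=
  mem_succ.mp (succ_nonempty M u a).choose_spec

noncomputable def chain (M : CMDP S A) (σ : Strat S A) (d : ℕ)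
    (p : List (S × A) × S) : ℕ → List (S × A) × S
  | 0 => p
  | i + 1 =>
      let q := chain M σ d p i
      (q.1 ++ [(q.2, σ d q.1 q.2)], pickSucc M q.2 (σ d q.1 q.2))

lemma hist_succ (ρ : Run S A) (i : ℕ) :
    hist ρ (i+1) = hist ρ i ++ [(ρ.st i, ρ.ac i)] := by
  simp [hist, List.range_succ]

lemma hist_congr {ρ ρ' : Run S A} {i : ℕ}
    (h : ∀ j < i, ρ.st j = ρ'.st j ∧ ρ.ac j = ρ'.ac j) : hist ρ i = hist ρ' i := by
  unfold hist
  refine List.map_congr_left fun j hj => ?_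
  have hj' := List.mem_range.mp hj
  rw [(h j hj').1, (h j hj').2]

lemma exists_run_ext (M : CMDP S A) (σ : Strat S A) (d ℓ : ℕ)
    (stf : ℕ → S) (acf : ℕ → A)
    (hC : ∀ i < ℓ, acf i = σ d (hist ⟨stf, acf⟩ i) (stf i) ∧
      0 < M.δ (stf i) (acf i) (stf (i+1))) :
    ∃ ρ : Run S A, Compatible M σ d ρ ∧ (∀ i ≤ ℓ, ρ.st i = stf i) ∧
      (∀ i < ℓ, ρ.ac i = acf i) := by
  classical
  set H : List (S × A) := hist ⟨stf, acf⟩ ℓ with hH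
  set ch : ℕ → List (S × A) × S := chain M σ d (H, stf ℓ) with hch
  refine ⟨⟨fun i => if i ≤ ℓ then stf i else (ch (i - ℓ)).2,
           fun i => if i < ℓ then acf i else σ d (ch (i - ℓ)).1 (ch (i - ℓ)).2⟩,
          ?_, fun i hi => by simp [hi], fun i hi => by simp [hi]⟩
  set ρ : Run S A := ⟨fun i => if i ≤ ℓ then stf i else (ch (i - ℓ)).2,
           fun i => if i < ℓ then acf i else σ d (ch (i - ℓ)).1 (ch (i - ℓ)).2⟩ with hρ
  -- key invariant
  have hst : ∀ i, ρ.st (ℓ + i) = (ch i).2 := by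
    intro i
    cases i with
    | zero => simp [hρ, hch, chain]
    | succ i =>
        have h1 : ¬ (ℓ + (i+1) ≤ ℓ) := by omega
        simp only [hρ, if_neg h1]
        rw [show ℓ + (i+1) - ℓ = i + 1 from by omega]
  have hhist : ∀ i, hist ρ (ℓ + i) = (ch i).1 := by
    intro i
    induction i with
    | zero =>
        simp only [Nat.add_zero]
        have : hist ρ ℓ = hist ⟨stf, acf⟩ ℓ := by
          refine hist_congr fun j hj => ?_
          constructor
          · simp [hρ, Nat.le_of_lt hj]
          · simp [hρ, hj]
        rw [this, hch]; simp [chain, hH]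
    | succ i ih =>
        rw [show ℓ + (i+1) = (ℓ + i) + 1 from rfl, hist_succ, ih, hst i]
        have hac : ρ.ac (ℓ + i) = σ d (ch i).1 (ch i).2 := by
          have h1 : ¬ (ℓ + i < ℓ) := by omega
          simp only [hρ, if_neg h1]
          rw [show ℓ + i - ℓ = i from by omega]
        rw [hac, hch]
        rfl
  intro i
  rcases Nat.lt_or_ge i ℓ with hi | hi
  · constructor
    · have h1 : ρ.ac i = acf i := by simp [hρ, hi]
      have h2 : ρ.st i = stf i := by simp [hρ, Nat.le_of_lt hi]
      have h3 : hist ρ i = hist ⟨stf, acf⟩ i := by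
        refine hist_congr fun j hj => ?_
        have hjℓ : j < ℓ := lt_trans hj hi
        constructor
        · simp [hρ, Nat.le_of_lt hjℓ]
        · simp [hρ, hjℓ]
      rw [h1, h2, h3]; exact (hC i hi).1
    · rcases Nat.lt_or_ge (i+1) ℓ with hi1 | hi1
      · have h1 : ρ.ac i = acf i := by simp [hρ, hi]
        have h2 : ρ.st i = stf i := by simp [hρ, Nat.le_of_lt hi]
        have h3 : ρ.st (i+1) = stf (i+1) := by simp [hρ, Nat.le_of_lt hi1]
        rw [h1, h2, h3]; exact (hC i hi).2
      · have hieq : i + 1 = ℓ := by omega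
        have h1 : ρ.ac i = acf i := by simp [hρ, hi]
        have h2 : ρ.st i = stf i := by simp [hρ, Nat.le_of_lt hi]
        have h3 : ρ.st (i+1) = stf (i+1) := by simp [hρ, Nat.le_of_eq hieq]
        rw [h1, h2, h3]; exact (hC i hi).2
  · obtain ⟨j, rfl⟩ := Nat.exists_eq_add_of_le hi
    have hnot : ¬ (ℓ + j < ℓ) := by omega
    have hac : ρ.ac (ℓ + j) = σ d (ch j).1 (ch j).2 := by
      simp only [hρ, if_neg hnot]
      rw [show ℓ + j - ℓ = j from by omega]
    constructor
    · rw [hac, hhist j, hst j]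
    · have h2 : ρ.st (ℓ + j + 1) = (ch (j+1)).2 := by
        rw [show ℓ + j + 1 = ℓ + (j + 1) from rfl]; exact hst (j+1)
      rw [hac, hst j, h2]
      show 0 < M.δ (ch j).2 _ (pickSucc M (ch j).2 (σ d (ch j).1 (ch j).2))
      exact pickSucc_pos M _ _

/-! ### analysis of runs following the greedy strategy on a fixed point -/

lemma ne_top_of_add_le {a b c : ℕ∞} (h : a + b ≤ c) (hc : c ≠ ⊤) : b ≠ ⊤ := by
  rintro rfl
  rw [add_top, top_le_iff] at h
  exact hc h

section Greedy

variable {M : CMDP S A} {T : Finset S} {v : S → ℕ∞} {gA : S → A}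
  (hgA : ∀ s ∉ T, v s = (M.γ s (gA s) : ℕ∞) + (M.Succ s (gA s)).sup v)
  {d : ℕ} {ρ : Run S A} (hcomp : Compatible M (fun _ _ s => gA s) d ρ)

include hgA hcomp

lemma greedy_step {s t : S} (hs : s ∉ T) (ht : t ∈ M.Succ s (gA s)) :
    (M.γ s (gA s) : ℕ∞) + v t ≤ v s := by
  rw [hgA s hs]
  exact add_le_add_right (Finset.le_sup ht) _

lemma greedy_seg {i j : ℕ} (hij : i ≤ j) (hT : ∀ m, i ≤ m → m < j → ρ.st m ∉ T) :
    (↑(∑ m ∈ Finset.Ico i j, M.γ (ρ.st m) (ρ.ac m)) : ℕ∞) + v (ρ.st j) ≤ v (ρ.st i) := by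
  induction j, hij using Nat.le_induction with
  | base => simp
  | succ j hij ih =>
      have hTj : ρ.st j ∉ T := hT j hij (Nat.lt_succ_self j)
      have hac : ρ.ac j = gA (ρ.st j) := (hcomp j).1
      have hsucc : ρ.st (j+1) ∈ M.Succ (ρ.st j) (gA (ρ.st j)) := by
        rw [mem_succ, ← hac]; exact (hcomp j).2
      have hstep := greedy_step hgA hcomp hTj hsucc
      have ih' := ih (fun m hm hm' => hT m hm (Nat.lt_succ_of_lt hm'))
      rw [Finset.sum_Ico_succ_top hij, Nat.cast_add]
      calc (↑(∑ m ∈ Finset.Ico i j, M.γ (ρ.st m) (ρ.ac m)) : ℕ∞)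
            + ↑(M.γ (ρ.st j) (ρ.ac j)) + v (ρ.st (j+1))
          = ↑(∑ m ∈ Finset.Ico i j, M.γ (ρ.st m) (ρ.ac m))
            + (↑(M.γ (ρ.st j) (gA (ρ.st j))) + v (ρ.st (j+1))) := by rw [hac, add_assoc]
        _ ≤ ↑(∑ m ∈ Finset.Ico i j, M.γ (ρ.st m) (ρ.ac m)) + v (ρ.st j) :=
            add_le_add_right hstep _
        _ ≤ v (ρ.st i) := ih'

lemma greedy_norep (hdec : Decreasing M) {i j : ℕ} (hij : i < j)
    (hT : ∀ m, i ≤ m → m < j → ρ.st m ∉ T) (hfin : v (ρ.st i) ≠ ⊤) :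
    ρ.st i ≠ ρ.st j := by
  intro heq
  obtain ⟨m, hm, hγ⟩ := hdec (j - i) (fun m => ρ.st (i + m)) (fun m => ρ.ac (i + m))
    (by omega)
    (fun m hm => by
      have := (hcomp (i + m)).2
      rwa [show i + m + 1 = i + (m + 1) from rfl] at this)
    (by show ρ.st (i + 0) = ρ.st (i + (j - i))
        rw [Nat.add_zero, Nat.add_sub_cancel' (Nat.le_of_lt hij)]; exact heq)
  have hmem : i + m ∈ Finset.Ico i j := by
    rw [Finset.mem_Ico]; omega
  have hsum : 1 ≤ ∑ m' ∈ Finset.Ico i j, M.γ (ρ.st m') (ρ.ac m') :=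
    le_trans hγ (Finset.single_le_sum (f := fun m' => M.γ (ρ.st m') (ρ.ac m'))
      (fun _ _ => Nat.zero_le _) hmem)
  have hseg := greedy_seg hgA hcomp (Nat.le_of_lt hij) hT
  rw [← heq] at hseg
  lift v (ρ.st i) to ℕ using hfin with c hc
  have : (↑(∑ m' ∈ Finset.Ico i j, M.γ (ρ.st m') (ρ.ac m')) + (c : ℕ∞)) = 
      ((∑ m' ∈ Finset.Ico i j, M.γ (ρ.st m') (ρ.ac m') + c : ℕ) : ℕ∞) := by push_cast; rfl
  rw [this, Nat.cast_le] at hseg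
  omega

lemma greedy_reach (hdec : Decreasing M) {n : ℕ}
    (hn : ∀ k ∈ {k : ℕ | ∃ (st : ℕ → S) (ac : ℕ → A), SimplePath M k st ac}, k ≤ n)
    {d0 : ℕ} (hst0 : v (ρ.st 0) = (d0 : ℕ∞)) :
    ∃ f ≤ n, ρ.st f ∈ T ∧ (∑ j ∈ Finset.range f, M.γ (ρ.st j) (ρ.ac j)) ≤ d0 := by
  have hfin : ∀ i, (∀ m < i, ρ.st m ∉ T) → v (ρ.st i) ≠ ⊤ := by
    intro i hT
    have := greedy_seg hgA hcomp (Nat.zero_le i) (fun m _ hm => hT m hm)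
    rw [hst0] at this
    exact ne_top_of_add_le this (by simp)
  -- the run hits T
  have hhits : ∃ f, ρ.st f ∈ T := by
    by_contra hno
    push_neg at hno
    obtain ⟨a, b, hab, heq⟩ := Fintype.exists_ne_map_eq_of_card_lt
      (fun k : Fin (Fintype.card S + 1) => ρ.st k.val) (by simp)
    rcases Nat.lt_or_ge a.val b.val with h | h
    · exact greedy_norep hgA hcomp hdec h (fun m _ _ => hno m)
        (hfin a.val (fun m _ => hno m)) heq
    · have h' : b.val < a.val := by
        rcases Nat.lt_or_ge b.val a.val with h' | h'
        · exact h'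
        · exact absurd (Fin.ext (le_antisymm h' h)) hab
      exact greedy_norep hgA hcomp hdec h' (fun m _ _ => hno m)
        (hfin b.val (fun m _ => hno m)) heq.symm
  classical
  let f := Nat.find hhits
  have hfT : ρ.st f ∈ T := Nat.find_spec hhits
  have hfmin : ∀ m < f, ρ.st m ∉ T := fun m hm => Nat.find_min hhits hm
  -- f ≤ n via simple path
  have hsimple : SimplePath M f ρ.st ρ.ac := by
    constructor
    · exact fun i _ => (hcomp i).2
    · intro i j hij hjf heq
      exfalso
      refine greedy_norep hgA hcomp hdec hij (fun m _ hm => hfmin m (by omega))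
        (hfin i (fun m hm => hfmin m (by omega))) heq
  have hfn : f ≤ n := hn f ⟨ρ.st, ρ.ac, hsimple⟩
  refine ⟨f, hfn, hfT, ?_⟩
  have hseg := greedy_seg hgA hcomp (Nat.zero_le f) (fun m _ hm => hfmin m hm)
  rw [hst0] at hseg
  have : (↑(∑ m ∈ Finset.Ico 0 f, M.γ (ρ.st m) (ρ.ac m)) : ℕ∞) ≤ (d0 : ℕ∞) :=
    le_trans (le_add_right le_rfl) hseg
  rw [Nat.cast_le] at this
  simpa using this

end Greedy

/-! ### the iterates are below the fixed point (given sure hitting) -/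

lemma step_le {M : CMDP S A} {T : Finset S} {v : S → ℕ∞} {gA : S → A}
    (hgA : ∀ s ∉ T, v s = (M.γ s (gA s) : ℕ∞) + (M.Succ s (gA s)).sup v)
    {s t : S} (hs : s ∉ T) (ht : t ∈ M.Succ s (gA s)) :
    (M.γ s (gA s) : ℕ∞) + v t ≤ v s := by
  rw [hgA s hs]
  exact add_le_add_right (Finset.le_sup ht) _

lemma compat_prepend {M : CMDP S A} {gA : S → A} {d : ℕ} {ρ : Run S A}
    (hcomp : Compatible M (fun _ _ s => gA s) d ρ) {s : S}
    (ht : ρ.st 0 ∈ M.Succ s (gA s)) :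
    Compatible M (fun _ _ s => gA s) d
      ⟨fun i => Nat.rec s (fun i _ => ρ.st i) i,
       fun i => Nat.rec (gA s) (fun i _ => ρ.ac i) i⟩ := by
  intro i
  cases i with
  | zero => exact ⟨rfl, mem_succ.mp ht⟩
  | succ i =>
      refine ⟨?_, (hcomp i).2⟩
      show ρ.ac i = gA (ρ.st i)
      exact (hcomp i).1

lemma le_fix [Nonempty A] {M : CMDP S A} {T : Finset S} {v : S → ℕ∞} {gA : S → A}
    (hgA : ∀ s ∉ T, v s = (M.γ s (gA s) : ℕ∞) + (M.Succ s (gA s)).sup v) :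
    ∀ (k : ℕ) (s : S), v s ≠ ⊤ →
      (∀ ρ : Run S A, Compatible M (fun _ _ s => gA s) 0 ρ → ρ.st 0 = s →
        ∃ f ≤ k, ρ.st f ∈ T) →
      (Ffun M T)^[k] (xT T) s ≤ v s := by
  intro k
  induction k with
  | zero =>
      intro s hfin hhit
      by_cases hs : s ∈ T
      · rw [iter_T M T 0 hs]; exact zero_le
      · exfalso
        obtain ⟨ρ, hcomp, hst, -⟩ := exists_run_ext M (fun _ _ s => gA s) 0 0
          (fun _ => s) (fun _ => gA s) (by omega)
        obtain ⟨f, hf, hfT⟩ := hhit ρ hcomp (hst 0 le_rfl)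
        rw [Nat.le_zero] at hf
        subst hf
        rw [hst 0 le_rfl] at hfT
        exact hs hfT
  | succ k ih =>
      intro s hfin hhit
      by_cases hs : s ∈ T
      · rw [iter_T M T (k+1) hs]; exact zero_le
      · rw [Function.iterate_succ_apply']
        have h1 : Ffun M T ((Ffun M T)^[k] (xT T)) s =
            Finset.univ.inf (fun a => M.AV ((Ffun M T)^[k] (xT T)) s a) := by
          simp [Ffun, hs]
        rw [h1]
        refine le_trans (Finset.inf_le (Finset.mem_univ (gA s))) ?_
        show (M.γ s (gA s) : ℕ∞) + (M.Succ s (gA s)).sup ((Ffun M T)^[k] (xT T)) ≤ v s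
        rw [hgA s hs]
        refine add_le_add_right (Finset.sup_mono_fun fun t ht => ?_) _
        have hstep := step_le hgA hs ht
        refine ih t (ne_top_of_add_le hstep hfin) ?_
        intro ρ hcomp hst0
        have hcomp' := compat_prepend hcomp (by rw [hst0]; exact ht)
        obtain ⟨f, hf, hfT⟩ := hhit _ hcomp' rfl
        cases f with
        | zero => exact absurd hfT hs
        | succ f => exact ⟨f, by omega, hfT⟩

/-! ### minimality: finite histories machinery -/

/-- a finite history consistent with strategy `σ` from `s` -/
def ConsH (M : CMDP S A) (σ : Strat S A) (d : ℕ) (s : S) (ℓ : ℕ)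
    (stf : ℕ → S) (acf : ℕ → A) : Prop :=
  stf 0 = s ∧ ∀ i < ℓ, acf i = σ d (hist ⟨stf, acf⟩ i) (stf i) ∧
    0 < M.δ (stf i) (acf i) (stf (i+1))

/-- cost of a finite history -/
def costH (M : CMDP S A) (stf : ℕ → S) (acf : ℕ → A) (ℓ : ℕ) : ℕ :=
  ∑ j ∈ Finset.range ℓ, M.γ (stf j) (acf j)

/-- the objective is not yet satisfied within the history -/
def UnsatH (M : CMDP S A) (T : Finset S) (d : ℕ) (ℓ : ℕ)
    (stf : ℕ → S) (acf : ℕ → A) : Prop :=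
  ∀ f ≤ ℓ, ¬(stf f ∈ T ∧ costH M stf acf f ≤ d)

lemma costH_mono (M : CMDP S A) (stf : ℕ → S) (acf : ℕ → A) {m ℓ : ℕ} (h : m ≤ ℓ) :
    costH M stf acf m ≤ costH M stf acf ℓ :=
  Finset.sum_le_sum_of_subset (Finset.range_subset_range.mpr h)

section MinFix

variable {M : CMDP S A} {T : Finset S} {σy : Strat S A} {s : S} {d : ℕ}
  (hsure : ∀ ρ, Compatible M σy d ρ → ρ.st 0 = s → NRReach M T d ρ)

include hsure

lemma cost_bound {ℓ : ℕ} {stf : ℕ → S} {acf : ℕ → A}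
    (hC : ConsH M σy d s ℓ stf acf) (hU : UnsatH M T d ℓ stf acf) :
    costH M stf acf ℓ ≤ d := by
  obtain ⟨ρ, hcomp, hst, hac⟩ := exists_run_ext M σy d ℓ stf acf hC.2
  obtain ⟨i, f, hfi, hfT, hcost⟩ := hsure ρ hcomp (by rw [hst 0 (Nat.zero_le _), hC.1])
  have hcosteq : ∀ m, m ≤ ℓ →
      (∑ j ∈ Finset.range m, M.γ (ρ.st j) (ρ.ac j)) = costH M stf acf m := by
    intro m hm
    refine Finset.sum_congr rfl fun j hj => ?_
    have hj' := Finset.mem_range.mp hj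
    rw [hst j (by omega), hac j (by omega)]
  rcases le_or_gt f ℓ with hfℓ | hfℓ
  · exfalso
    refine hU f hfℓ ⟨?_, ?_⟩
    · rw [← hst f hfℓ]; exact hfT
    · rw [← hcosteq f hfℓ]; exact hcost
  · calc costH M stf acf ℓ = ∑ j ∈ Finset.range ℓ, M.γ (ρ.st j) (ρ.ac j) :=
          (hcosteq ℓ le_rfl).symm
      _ ≤ ∑ j ∈ Finset.range f, M.γ (ρ.st j) (ρ.ac j) :=
          Finset.sum_le_sum_of_subset (Finset.range_subset_range.mpr (Nat.le_of_lt hfℓ))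
      _ ≤ d := hcost

lemma states_avoid {ℓ : ℕ} {stf : ℕ → S} {acf : ℕ → A}
    (hC : ConsH M σy d s ℓ stf acf) (hU : UnsatH M T d ℓ stf acf) :
    ∀ i ≤ ℓ, stf i ∉ T := by
  intro i hi hiT
  exact hU i hi ⟨hiT, (costH_mono M stf acf hi).trans (cost_bound hsure hC hU)⟩

lemma len_bound (hdec : Decreasing M) {ℓ : ℕ} {stf : ℕ → S} {acf : ℕ → A}
    (hC : ConsH M σy d s ℓ stf acf) (hU : UnsatH M T d ℓ stf acf) :
    ℓ < (d+1) * Fintype.card S + 1 := by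
  by_contra hℓ
  push_neg at hℓ
  have hcd : costH M stf acf ℓ ≤ d := cost_bound hsure hC hU
  have hle : ∀ i : Fin ((d+1) * Fintype.card S + 1), (i : ℕ) ≤ ℓ :=
    fun i => by have := i.isLt; omega
  have hcle : ∀ i : Fin ((d+1) * Fintype.card S + 1),
      costH M stf acf (i : ℕ) ≤ d :=
    fun i => (costH_mono M stf acf (hle i)).trans hcd
  obtain ⟨a, b, hab, heq⟩ := Fintype.exists_ne_map_eq_of_card_lt
    (fun i : Fin ((d+1) * Fintype.card S + 1) =>
      ((⟨costH M stf acf (i : ℕ), by have := hcle i; omega⟩ : Fin (d+1)), stf (i : ℕ)))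
    (by simp [Fintype.card_prod, Fintype.card_fin, mul_comm])
  have key : ∀ (a b : Fin ((d+1) * Fintype.card S + 1)), (a : ℕ) < (b : ℕ) →
      costH M stf acf (a : ℕ) = costH M stf acf (b : ℕ) → stf (a : ℕ) = stf (b : ℕ) →
      False := by
    intro a b hab hceq hseq
    have hbℓ : (b : ℕ) ≤ ℓ := hle b
    have hsum0 : ∑ m ∈ Finset.Ico (a : ℕ) (b : ℕ), M.γ (stf m) (acf m) = 0 := by
      have hsplit := Finset.sum_Ico_consecutive (fun m => M.γ (stf m) (acf m))
        (Nat.zero_le (a : ℕ)) (Nat.le_of_lt hab)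
      have h1 : costH M stf acf (a : ℕ) + ∑ m ∈ Finset.Ico (a : ℕ) (b : ℕ),
          M.γ (stf m) (acf m) = costH M stf acf (b : ℕ) := by
        unfold costH
        simp only [Finset.range_eq_Ico]
        simpa using hsplit
      omega
    obtain ⟨m, hm, hγ⟩ := hdec ((b : ℕ) - (a : ℕ)) (fun m => stf ((a : ℕ) + m))
      (fun m => acf ((a : ℕ) + m)) (by omega)
      (fun m hm => by
        have := (hC.2 ((a : ℕ) + m) (by omega)).2
        rwa [show (a : ℕ) + m + 1 = (a : ℕ) + (m + 1) from rfl] at this)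
      (by show stf ((a : ℕ) + 0) = stf ((a : ℕ) + ((b : ℕ) - (a : ℕ)))
          rw [Nat.add_zero, Nat.add_sub_cancel' (Nat.le_of_lt hab)]; exact hseq)
    have hmem : (a : ℕ) + m ∈ Finset.Ico (a : ℕ) (b : ℕ) := by
      rw [Finset.mem_Ico]; omega
    have := (Finset.sum_eq_zero_iff.mp hsum0) _ hmem
    omega
  have hc : costH M stf acf (a : ℕ) = costH M stf acf (b : ℕ) := by
    have := congrArg (fun p => (p.1 : ℕ)) heq
    simpa using this
  have hs : stf (a : ℕ) = stf (b : ℕ) := congrArg Prod.snd heq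
  rcases Nat.lt_or_ge (a : ℕ) (b : ℕ) with h | h
  · exact key a b h hc hs
  · rcases Nat.lt_or_ge (b : ℕ) (a : ℕ) with h' | h'
    · exact key b a h' hc.symm hs.symm
    · exact hab (Fin.ext (le_antisymm h' h))

lemma Qmain [Nonempty A] (hdec : Decreasing M) {v : S → ℕ∞} (hv : Ffun M T v = v) :
    ∀ (k ℓ : ℕ) (stf : ℕ → S) (acf : ℕ → A),
      ℓ + k = (d+1) * Fintype.card S + 1 →
      ConsH M σy d s ℓ stf acf → UnsatH M T d ℓ stf acf →
      (costH M stf acf ℓ : ℕ∞) + v (stf ℓ) ≤ (d : ℕ∞) := by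
  intro k
  induction k with
  | zero =>
      intro ℓ stf acf hLen hC hU
      exfalso
      have := len_bound hsure hdec hC hU
      omega
  | succ k ih =>
      intro ℓ stf acf hLen hC hU
      have hu : stf ℓ ∉ T := states_avoid hsure hC hU ℓ le_rfl
      set u := stf ℓ with hudef
      set a := σy d (hist ⟨stf, acf⟩ ℓ) u with hadef
      have key : ∀ t ∈ M.Succ u a,
          (costH M stf acf ℓ : ℕ∞) + ((M.γ u a : ℕ∞) + v t) ≤ (d : ℕ∞) := by
        intro t ht
        set stf' : ℕ → S := fun i => if i ≤ ℓ then stf i else t with hstf'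
        set acf' : ℕ → A := fun i => if i < ℓ then acf i else a with hacf'
        have hstfeq : ∀ i ≤ ℓ, stf' i = stf i := fun i hi => by simp [hstf', hi]
        have hacfeq : ∀ i < ℓ, acf' i = acf i := fun i hi => by simp [hacf', hi]
        have hhisteq : ∀ i ≤ ℓ, hist ⟨stf', acf'⟩ i = hist ⟨stf, acf⟩ i := by
          intro i hi
          refine hist_congr fun j hj => ⟨hstfeq j (by omega), hacfeq j (by omega)⟩
        have hcosteq : ∀ m ≤ ℓ, costH M stf' acf' m = costH M stf acf m := by
          intro m hm
          refine Finset.sum_congr rfl fun j hj => ?_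
          have hj' := Finset.mem_range.mp hj
          rw [hstfeq j (by omega), hacfeq j (by omega)]
        have hstt : stf' (ℓ+1) = t := by simp [hstf']
        have hacℓ : acf' ℓ = a := by simp [hacf']
        have hC' : ConsH M σy d s (ℓ+1) stf' acf' := by
          refine ⟨by rw [hstfeq 0 (Nat.zero_le _)]; exact hC.1, fun i hi => ?_⟩
          rcases Nat.lt_or_ge i ℓ with hiℓ | hiℓ
          · refine ⟨?_, ?_⟩
            · rw [hacfeq i hiℓ, hhisteq i (Nat.le_of_lt hiℓ), hstfeq i (Nat.le_of_lt hiℓ)]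
              exact (hC.2 i hiℓ).1
            · rw [hacfeq i hiℓ, hstfeq i (Nat.le_of_lt hiℓ), hstfeq (i+1) (by omega)]
              exact (hC.2 i hiℓ).2
          · have hieq : i = ℓ := by omega
            subst hieq
            refine ⟨?_, ?_⟩
            · rw [hacℓ, hhisteq i le_rfl, hstfeq i le_rfl, hadef, hudef]
            · rw [hacℓ, hstfeq i le_rfl, hstt]
              exact mem_succ.mp ht
        have hcost' : costH M stf' acf' (ℓ+1) = costH M stf acf ℓ + M.γ u a := by
          unfold costH
          rw [Finset.sum_range_succ]
          congr 1
          · exact hcosteq ℓ le_rfl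
          · rw [hstfeq ℓ le_rfl, hacℓ]
        by_cases hU' : UnsatH M T d (ℓ+1) stf' acf'
        · have := ih (ℓ+1) stf' acf' (by omega) hC' hU'
          rw [hstt, hcost'] at this
          rw [← add_assoc, ← Nat.cast_add]
          exact this
        · unfold UnsatH at hU'
          push_neg at hU'
          obtain ⟨f, hf, hfT, hfcost⟩ := hU'
          have hfeq : f = ℓ + 1 := by
            by_contra hne
            have hfℓ : f ≤ ℓ := by omega
            refine hU f hfℓ ⟨?_, ?_⟩
            · rw [← hstfeq f hfℓ]; exact hfT
            · rw [← hcosteq f hfℓ]; exact hfcost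
          subst hfeq
          rw [hstt] at hfT
          rw [hcost'] at hfcost
          rw [fix_T hv hfT, add_zero, ← Nat.cast_add, Nat.cast_le]
          exact hfcost
      -- combine
      have hvu : v u ≤ (M.γ u a : ℕ∞) + (M.Succ u a).sup v := by
        conv_lhs => rw [← hv]
        simp only [Ffun, hu, if_false]
        exact Finset.inf_le (Finset.mem_univ a)
      refine le_trans (add_le_add_right hvu _) ?_
      rw [← add_assoc]
      exact sup_add_le_of (succ_nonempty M u a) fun t ht => by
        rw [add_assoc]; exact key t ht

end MinFix

lemma min_fix [Nonempty A] {M : CMDP S A} {T : Finset S} (hdec : Decreasing M)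
    {v : S → ℕ∞} (hv : Ffun M T v = v) {y : S → ℕ∞}
    (hy : SatVec M (NRReach M T) y) : v ≤ y := by
  obtain ⟨σy, hσ⟩ := hy
  intro s
  rcases eq_or_ne (y s) ⊤ with hys | hys
  · rw [hys]; exact le_top
  lift y s to ℕ using hys with d hd
  have hsure : ∀ ρ, Compatible M σy d ρ → ρ.st 0 = s → NRReach M T d ρ :=
    hσ s d hd.symm
  by_cases hs : s ∈ T
  · rw [fix_T hv hs]; exact zero_le
  · have hU : UnsatH M T d 0 (fun _ => s) (fun _ => Classical.arbitrary A) := by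
      intro f hf
      rw [Nat.le_zero] at hf
      subst hf
      rintro ⟨hfT, -⟩
      exact hs hfT
    have hC : ConsH M σy d s 0 (fun _ => s) (fun _ => Classical.arbitrary A) :=
      ⟨rfl, fun i hi => absurd hi (by omega)⟩
    have := Qmain hsure hdec hv ((d+1) * Fintype.card S + 1) 0 _ _ (by omega) hC hU
    simpa [costH] using this

end Aux

open CMDP in
/-- in a decreasing CMDP, iterating 𝓕 on `x_T` reaches a fixed point
after at most `n` steps (`n` = length of the longest simple path), and this fixed
point is the minimal-load vector for sure non-reloading reachability. -/
theorem stmt2 {S A : Type} [Fintype S] [Fintype A] [DecidableEq S] [DecidableEq A]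
    (M : CMDP S A) (T : Finset S) (n : ℕ)
    (hdec : Decreasing M)
    (hn : IsGreatest {k : ℕ | ∃ (st : ℕ → S) (ac : ℕ → A), SimplePath M k st ac} n) :
    Ffun M T ((Ffun M T)^[n] (xT T)) = (Ffun M T)^[n] (xT T) ∧
    IsML (SatVec M (NRReach M T)) ((Ffun M T)^[n] (xT T)) := by
  obtain ⟨hmem, hub'⟩ := hn
  obtain ⟨st0, ac0, -⟩ := hmem
  have hub : ∀ k ∈ {k : ℕ | ∃ (st : ℕ → S) (ac : ℕ → A), SimplePath M k st ac}, k ≤ n :=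
    fun k hk => hub' hk
  haveI : Nonempty S := ⟨st0 0⟩
  haveI : Nonempty A := ⟨ac0 0⟩
  obtain ⟨K, hK⟩ := exists_stab M T
  set v : S → ℕ∞ := (Ffun M T)^[max K n] (xT T) with hvdef
  have hfix : Ffun M T v = v := by
    have h1 := hK (max K n) (le_max_left _ _)
    have h2 := hK (max K n + 1) ((le_max_left _ _).trans (Nat.le_succ _))
    rw [hvdef, ← Function.iterate_succ_apply' (Ffun M T) (max K n) (xT T), h2, ← h1]
  have hgA' : ∀ s : S, ∃ a : A, s ∉ T →
      v s = (M.γ s a : ℕ∞) + (M.Succ s a).sup v := by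
    intro s
    by_cases hs : s ∈ T
    · exact ⟨Classical.arbitrary A, fun h => absurd hs h⟩
    · obtain ⟨a, ha⟩ := fix_step hfix hs
      exact ⟨a, fun _ => ha⟩
  choose gA hgAaux using hgA'
  have hgA : ∀ s ∉ T, v s = (M.γ s (gA s) : ℕ∞) + (M.Succ s (gA s)).sup v :=
    fun s hs => hgAaux s hs
  have hvn : (Ffun M T)^[n] (xT T) = v := by
    refine le_antisymm (fun s => ?_) (iter_anti M T (le_max_right _ _))
    by_cases hfin : v s = ⊤
    · rw [hfin]; exact le_top
    · refine le_fix hgA n s hfin ?_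
      intro ρ hcomp hst0
      lift v s to ℕ using hfin with d0 hd0
      obtain ⟨f, hf, hfT, -⟩ := greedy_reach hgA hcomp hdec hub
        (by rw [hst0, ← hd0])
      exact ⟨f, hf, hfT⟩
  rw [hvn]
  refine ⟨hfix, ?_, ?_⟩
  · refine ⟨fun _ _ s => gA s, fun s d hd ρ hcomp hst0 => ?_⟩
    obtain ⟨f, hf, hfT, hcost⟩ := greedy_reach hgA hcomp hdec hub
      (d0 := d) (by rw [hst0, hd])
    exact ⟨f, f, le_rfl, hfT, hcost⟩
  · exact fun y hy => min_fix hdec hfix hy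
end

section
/- In every decreasing CMDP there exists a memoryless strategy σ such that σ loaded with the minimal safety vector ml_S surely satisfies the safety objective, i.e., for every state s with ml_S(s) ≤ cap and every d with ml_S(s) ≤ d ≤ cap, all σ-compatible s-initiated runs loaded with d are safe. -/
open Classical

namespace CMDP

variable {S A : Type} [Fintype S] [Fintype A] [DecidableEq S] [DecidableEq A]

/-! ### Auxiliary material for statement 7 -/

lemma exists_pos_succ (M : CMDP S A) (s : S) (a : A) : ∃ t, 0 < M.δ s a t := by
  by_contra h
  push_neg at h
  have h0 : ∑ t, M.δ s a t = 0 :=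
    Finset.sum_eq_zero (fun t _ => le_antisymm (h t) zero_le)
  rw [M.δ_sum] at h0
  exact one_ne_zero h0

lemma hist_succ_cons (ρ : Run S A) (i : ℕ) :
    hist ρ (i+1) =
      (ρ.st 0, ρ.ac 0) ::
        hist (⟨fun j => ρ.st (j+1), fun j => ρ.ac (j+1)⟩ : Run S A) i := by
  unfold hist
  rw [List.range_succ_eq_map, List.map_cons, List.map_map]
  rfl

lemma exists_compatible (M : CMDP S A) (σ : Strat S A) (d : ℕ) (s : S) :
    ∃ ρ : Run S A, Compatible M σ d ρ ∧ ρ.st 0 = s := by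
  classical
  choose pick hpick using fun u a => M.exists_pos_succ u a
  let g : ℕ → List (S × A) × S := fun n =>
    Nat.rec (([], s))
      (fun _ p => (p.1 ++ [(p.2, σ d p.1 p.2)], pick p.2 (σ d p.1 p.2))) n
  refine ⟨⟨fun n => (g n).2, fun n => σ d (g n).1 (g n).2⟩, ?_, rfl⟩
  have hhist : ∀ n,
      hist (⟨fun n => (g n).2, fun n => σ d (g n).1 (g n).2⟩ : Run S A) n
        = (g n).1 := by
    intro n
    induction n with
    | zero => rfl
    | succ n ih =>
        unfold hist at ih ⊢
        rw [List.range_succ, List.map_append, ih]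
        rfl
  intro i
  refine ⟨?_, hpick _ _⟩
  show σ d (g i).1 (g i).2 = σ d _ _
  rw [hhist]

/-- the true minimal safe load at `s` -/
noncomputable def mstar (M : CMDP S A) : S → ℕ∞ := fun s =>
  if h : ∃ d : ℕ, ∃ σ : Strat S A, AllSafe M σ s d then ((Nat.find h : ℕ) : ℕ∞)
  else ⊤

lemma mstar_le (M : CMDP S A) {s : S} {d : ℕ} {σ : Strat S A}
    (h : AllSafe M σ s d) : mstar M s ≤ (d : ℕ∞) := by
  have hx : ∃ d : ℕ, ∃ σ : Strat S A, AllSafe M σ s d := ⟨d, σ, h⟩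
  rw [mstar, dif_pos hx]
  exact_mod_cast Nat.find_min' hx ⟨σ, h⟩

lemma safetySat_mstar (M : CMDP S A) (σ₀ : Strat S A) : SafetySat M (mstar M) := by
  classical
  let σs : S → Strat S A := fun s =>
    if h : ∃ d : ℕ, ∃ σ : Strat S A, AllSafe M σ s d then
      Classical.choose (Nat.find_spec h)
    else σ₀
  have hσs : ∀ s (h : ∃ d : ℕ, ∃ σ : Strat S A, AllSafe M σ s d),
      AllSafe M (σs s) s (Nat.find h) := by
    intro s h
    have := Classical.choose_spec (Nat.find_spec h)
    simpa [σs, dif_pos h] using this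
  refine ⟨fun d h u => σs ((h.head?.map Prod.fst).getD u) d h u, ?_⟩
  intro s d hd
  rw [mstar] at hd
  split_ifs at hd with h
  · have hfd : Nat.find h = d := by exact_mod_cast hd
    have hsafe : AllSafe M (σs s) s d := hfd ▸ hσs s h
    intro ρ hcomp h0
    refine hsafe ρ ?_ h0
    intro i
    refine ⟨?_, (hcomp i).2⟩
    have hc := (hcomp i).1
    cases i with
    | zero =>
        rw [hc]
        simp [hist, h0]
    | succ i =>
        rw [hc, hist_succ_cons]
        simp [h0]
  · exact absurd hd (by simp)

/-- the key one-step ("Bellman") property extracted from a safe strategy -/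
lemma step_facts (M : CMDP S A) (σ : Strat S A) (s : S) (d : ℕ)
    (hs : AllSafe M σ s d) :
    M.γ s (σ d [] s) ≤ (if s ∈ M.R then M.cap else d) ∧
    ∀ t, 0 < M.δ s (σ d [] s) t →
      mstar M t ≤ (((if s ∈ M.R then M.cap else d) - M.γ s (σ d [] s) : ℕ) : ℕ∞) := by
  classical
  set a := σ d [] s with ha
  obtain ⟨ρ₀, hρ₀, h0⟩ := M.exists_compatible σ d s
  have hac0 : ρ₀.ac 0 = a := by
    have := (hρ₀ 0).1
    rw [this, h0]; rfl
  have hlev1 : levels M d ρ₀.st ρ₀.ac 1 ≠ none := (hs ρ₀ hρ₀ h0) 1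
  have hlev1' : levels M d ρ₀.st ρ₀.ac 1 = M.nextLevel s a (some d) := by
    show M.nextLevel (ρ₀.st 0) (ρ₀.ac 0) (levels M d ρ₀.st ρ₀.ac 0) = _
    rw [h0, hac0]; rfl
  rw [hlev1'] at hlev1
  have hγ : M.γ s a ≤ (if s ∈ M.R then M.cap else d) := by
    unfold nextLevel at hlev1
    split_ifs at hlev1 ⊢ with h1 h2 h3 <;> simp_all
  refine ⟨hγ, ?_⟩
  set e := (if s ∈ M.R then M.cap else d) - M.γ s a with he
  have hnext : M.nextLevel s a (some d) = some e := by
    by_cases h1 : s ∈ M.R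
    · rw [if_pos h1] at hγ
      simp [nextLevel, h1, hγ, he]
    · rw [if_neg h1] at hγ
      simp [nextLevel, h1, hγ, he]
  intro t ht
  have hsafe' : AllSafe M (fun _ h u => σ d ((s, a) :: h) u) t e := by
    intro ρ' hcomp' h0'
    set ρ : Run S A :=
      ⟨fun i => match i with | 0 => s | (j+1) => ρ'.st j,
       fun i => match i with | 0 => a | (j+1) => ρ'.ac j⟩ with hρdef
    have hhist : ∀ i, hist ρ (i+1) = (s, a) :: hist ρ' i := by
      intro i
      unfold hist
      rw [List.range_succ_eq_map, List.map_cons, List.map_map]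
      rfl
    have hcomp : Compatible M σ d ρ := by
      intro i
      cases i with
      | zero =>
          refine ⟨ha, ?_⟩
          show 0 < M.δ s a (ρ'.st 0)
          rw [h0']; exact ht
      | succ i =>
          refine ⟨?_, (hcomp' i).2⟩
          rw [hhist]
          exact (hcomp' i).1
    have hsafeρ := hs ρ hcomp rfl
    have hlevels : ∀ i,
        levels M e ρ'.st ρ'.ac i = levels M d ρ.st ρ.ac (i+1) := by
      intro i
      induction i with
      | zero =>
          show some e = M.nextLevel (ρ.st 0) (ρ.ac 0) (some d)
          exact hnext.symm
      | succ i ih =>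
          show M.nextLevel _ _ _ = M.nextLevel _ _ _
          rw [ih]
    intro i
    rw [hlevels]
    exact hsafeρ (i+1)
  exact mstar_le M hsafe'

end CMDP

open CMDP in
/-- in every decreasing CMDP there is a memoryless strategy that,
loaded with the minimal safety vector, surely satisfies the safety objective. -/
theorem stmt7 {S A : Type} [Fintype S] [Fintype A] [DecidableEq S] [DecidableEq A]
    (M : CMDP S A) (hdec : Decreasing M)
    (mlS : S → ℕ∞) (hml : IsML (SafetySat M) mlS) :
    ∃ act : S → A, ∀ (s : S) (d : ℕ), mlS s ≤ (d : ℕ∞) → d ≤ M.cap →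
      AllSafe M (fun _ _ t => act t) s d := by
  classical
  obtain ⟨σ₀, hσ₀⟩ := hml.1
  have hle : ∀ u, mlS u ≤ mstar M u := fun u => hml.2 _ (safetySat_mstar M σ₀) u
  refine ⟨fun u => σ₀ (mlS u).toNat [] u, ?_⟩
  intro s d hds _hcap ρ hcomp h0
  have key : ∀ i, ∃ l : ℕ, levels M d ρ.st ρ.ac i = some l ∧
      mlS (ρ.st i) ≤ (l : ℕ∞) := by
    intro i
    induction i with
    | zero => exact ⟨d, rfl, by rw [h0]; exact hds⟩
    | succ i ih =>
        obtain ⟨l, hl, hmli⟩ := ih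
        have hfin : mlS (ρ.st i) ≠ ⊤ := by
          intro h; rw [h] at hmli; exact (by simp : ¬ (⊤ : ℕ∞) ≤ (l : ℕ∞)) hmli
        set u := ρ.st i with hu
        set du := (mlS u).toNat with hdu
        have hmu : mlS u = (du : ℕ∞) := (ENat.coe_toNat hfin).symm
        have hsafe : AllSafe M σ₀ u du := hσ₀ u du hmu
        obtain ⟨hγ, hsucc⟩ := M.step_facts σ₀ u du hsafe
        have haci : ρ.ac i = σ₀ du [] u := (hcomp i).1
        have hpos : 0 < M.δ u (σ₀ du [] u) (ρ.st (i+1)) := by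
          rw [← haci]; exact (hcomp i).2
        have hmls : mlS (ρ.st (i+1)) ≤
            (((if u ∈ M.R then M.cap else du) - M.γ u (σ₀ du [] u) : ℕ) : ℕ∞) :=
          le_trans (hle _) (hsucc _ hpos)
        have hdul : du ≤ l := by
          have := hmu ▸ hmli
          exact_mod_cast this
        have hlevS : levels M d ρ.st ρ.ac (i+1)
            = M.nextLevel u (ρ.ac i) (some l) := by
          show M.nextLevel (ρ.st i) (ρ.ac i) (levels M d ρ.st ρ.ac i) = _
          rw [hl]
        by_cases hR : u ∈ M.R
        · rw [if_pos hR] at hγ hmls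
          refine ⟨M.cap - M.γ u (ρ.ac i), ?_, ?_⟩
          · rw [hlevS]
            simp [nextLevel, hR, haci, hγ]
          · rw [haci]; exact hmls
        · rw [if_neg hR] at hγ hmls
          have hγl : M.γ u (ρ.ac i) ≤ l := by rw [haci]; exact le_trans hγ hdul
          refine ⟨l - M.γ u (ρ.ac i), ?_, ?_⟩
          · rw [hlevS]
            simp [nextLevel, hR, hγl]
          · refine le_trans hmls ?_
            rw [haci]
            exact_mod_cast Nat.sub_le_sub_right hdul _
  intro i hnone
  obtain ⟨l, hl, _⟩ := key i
  rw [hl] at hnone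
  exact Option.some_ne_none _ hnone
end

section
/- Monotonicity of SV with respect to the safety bound: for any vectors x ≥ y and any state-action pair (s,a), SV(x)(s,a) ≥ SV(y)(s,a); moreover, if x ≥ ml_S componentwise, then SV(x)(s,a) ≥ AV(ml_S)(s,a) ≥ ml_S(s) for all s ∉ T with ml_S(s) realized by some action, hence 𝓐(x) ≥ ml_S whenever x ≥ ml_S. -/
open Classical

open CMDP in
/-- monotonicity of `SV`: `x ≥ y → SV(x) ≥ SV(y)`; and if
`x ≥ ml_S` then `SV(x)(s,a) ≥ AV(ml_S)(s,a) ≥ ml_S(s)` for `s ∉ T`, hence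
`𝓐(x) ≥ ml_S`. -/
theorem stmt12 {S A : Type} [Fintype S] [Fintype A] [DecidableEq S] [DecidableEq A]
    (M : CMDP S A) (T : Finset S) (mlS : S → ℕ∞)
    (hreal : ∀ (s : S) (a : A), s ∉ T → mlS s ≤ AV M mlS s a) :
    (∀ x y : S → ℕ∞, y ≤ x → ∀ (s : S) (a : A), SV M mlS y s a ≤ SV M mlS x s a) ∧
    (∀ x : S → ℕ∞, mlS ≤ x →
      (∀ (s : S) (a : A), s ∉ T →
        AV M mlS s a ≤ SV M mlS x s a ∧ mlS s ≤ AV M mlS s a) ∧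
      mlS ≤ Afun M T mlS x) := by
  have mono : ∀ x y : S → ℕ∞, y ≤ x → ∀ (s : S) (a : A),
      SV M mlS y s a ≤ SV M mlS x s a := by
    intro x y hyx s a
    unfold SV
    refine add_le_add le_rfl (Finset.le_inf fun s' hs' => ?_)
    refine le_trans (Finset.inf_le hs') ?_
    exact max_le_max (hyx s') le_rfl
  refine ⟨mono, fun x hx => ?_⟩
  have hAV : ∀ (s : S) (a : A), AV M mlS s a ≤ SV M mlS x s a := by
    intro s a
    unfold AV SV
    refine add_le_add le_rfl (Finset.le_inf fun s' hs' => ?_)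
    refine Finset.sup_le fun t ht => ?_
    by_cases h : t = s'
    · subst h; exact le_max_of_le_left (hx t)
    · exact le_max_of_le_right (Finset.le_sup (Finset.mem_erase.mpr ⟨h, ht⟩))
  refine ⟨fun s a hs => ⟨hAV s a, hreal s a hs⟩, fun s => ?_⟩
  unfold Afun
  by_cases hs : s ∈ T
  · simp [hs]
  · simp only [hs, if_false]
    exact Finset.le_inf fun a _ => le_trans (hreal s a hs) (hAV s a)
end

section
/- Upon termination of the safety algorithm that iteratively removes unusable reload states, every removed reload state t ∈ R∖R' has infinite minimal safety load: ml_S(t) = ∞. Formally, if R'₀ = R and R'_{i+1} = R'_i ∖ {r ∈ R'_i : ml_{C(R'_i)}(Reach⁺_{R'_i})(r) > cap}, then for every i and every t ∈ R ∖ R'_i, no strategy from t loaded with cap keeps all runs safe in the decreasing CMDP C. -/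
open Classical

namespace CMDP

variable {S A : Type} [Fintype S] [Fintype A] [DecidableEq S] [DecidableEq A]

/-! ### Auxiliary lemmas -/

section Aux

variable (M : CMDP S A)

lemma exists_pos_gamma (hdec : Decreasing M) (st : ℕ → S) (ac : ℕ → A)
    (hv : ∀ i, 0 < M.δ (st i) (ac i) (st (i+1))) (k : ℕ) :
    ∃ i, k ≤ i ∧ 0 < M.γ (st i) (ac i) := by
  obtain ⟨a, b, hab, heq⟩ := Fintype.exists_ne_map_eq_of_card_lt
    (fun j : Fin (Fintype.card S + 1) => st (k + j)) (by simp)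
  have hne : (a : ℕ) ≠ (b : ℕ) := fun h => hab (Fin.val_injective h)
  wlog hlt : (a : ℕ) < (b : ℕ) generalizing a b
  · exact this b a hab.symm heq.symm hne.symm (by omega)
  obtain ⟨m, hm, hpos⟩ := hdec ((b : ℕ) - a) (fun m => st (k + a + m)) (fun m => ac (k + a + m))
    (by omega)
    (by intro i _
        show 0 < M.δ (st (k + (a:ℕ) + i)) (ac (k + (a:ℕ) + i)) (st (k + (a:ℕ) + (i + 1)))
        have h2 : k + (a : ℕ) + (i + 1) = (k + a + i) + 1 := by omega
        rw [h2]; exact hv (k + a + i))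
    (by have : k + (a : ℕ) + ((b : ℕ) - a) = k + b := by omega
        simp only [Nat.add_zero, this]; exact heq)
  exact ⟨k + a + m, by omega, hpos⟩

lemma sums_unbounded (hdec : Decreasing M) (st : ℕ → S) (ac : ℕ → A)
    (hv : ∀ i, 0 < M.δ (st i) (ac i) (st (i+1))) (b : ℕ) :
    ∃ m, b < ∑ j ∈ Finset.range m, M.γ (st j) (ac j) := by
  induction b with
  | zero =>
      obtain ⟨i, _, hi⟩ := exists_pos_gamma M hdec st ac hv 0
      exact ⟨i + 1, lt_of_lt_of_le hi (Finset.single_le_sum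
        (f := fun j => M.γ (st j) (ac j))
        (fun _ _ => Nat.zero_le _) (Finset.self_mem_range_succ i))⟩
  | succ b ih =>
      obtain ⟨m, hm⟩ := ih
      obtain ⟨i, him, hi⟩ := exists_pos_gamma M hdec st ac hv m
      refine ⟨i + 1, ?_⟩
      have h1 : ∑ j ∈ Finset.range m, M.γ (st j) (ac j)
          ≤ ∑ j ∈ Finset.range i, M.γ (st j) (ac j) :=
        Finset.sum_le_sum_of_subset (Finset.range_subset_range.2 him)
      rw [Finset.sum_range_succ]
      omega

lemma levels_avoid (d : ℕ) (st : ℕ → S) (ac : ℕ → A)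
    (h0 : st 0 ∈ M.R) (hsafe : ∀ i, levels M d st ac i ≠ none) :
    ∀ j, 1 ≤ j → (∀ i, 1 ≤ i → i < j → st i ∉ M.R) →
      levels M d st ac j = some (M.cap - ∑ i ∈ Finset.range j, M.γ (st i) (ac i)) ∧
      ∑ i ∈ Finset.range j, M.γ (st i) (ac i) ≤ M.cap := by
  intro j
  induction j with
  | zero => omega
  | succ j ih =>
      intro _ havoid
      rcases Nat.eq_zero_or_pos j with hj | hj
      · subst hj
        have h1 : levels M d st ac 1 = M.nextLevel (st 0) (ac 0) (some d) := rfl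
        rw [nextLevel, if_pos h0] at h1
        have hns := hsafe 1
        by_cases hle : M.γ (st 0) (ac 0) ≤ M.cap
        · rw [if_pos hle] at h1
          constructor
          · rw [h1, Finset.sum_range_one]
          · simpa using hle
        · rw [if_neg hle] at h1; exact absurd h1 hns
      · obtain ⟨hlev, hsum⟩ := ih hj (fun i h1 h2 => havoid i h1 (by omega))
        have hnotR : st j ∉ M.R := havoid j hj (by omega)
        have h1 : levels M d st ac (j+1) = M.nextLevel (st j) (ac j) (levels M d st ac j) := rfl
        rw [hlev, nextLevel, if_neg hnotR] at h1
        have hns := hsafe (j+1)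
        by_cases hle : M.γ (st j) (ac j) ≤ M.cap - ∑ i ∈ Finset.range j, M.γ (st i) (ac i)
        · rw [if_pos hle] at h1
          rw [Finset.sum_range_succ]
          constructor
          · rw [h1]; congr 1; omega
          · omega
        · rw [if_neg hle] at h1; exact absurd h1 hns

lemma safe_reach (hdec : Decreasing M) (σ : Strat S A) (d : ℕ) (ρ : Run S A)
    (hc : Compatible M σ d ρ) (h0 : ρ.st 0 ∈ M.R) (hs : SafeRun M d ρ) :
    ∃ f, 1 ≤ f ∧ ρ.st f ∈ M.R ∧
      ∑ j ∈ Finset.range f, M.γ (ρ.st j) (ρ.ac j) ≤ M.cap := by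
  have hv : ∀ i, 0 < M.δ (ρ.st i) (ρ.ac i) (ρ.st (i+1)) := fun i => (hc i).2
  by_cases hex : ∃ f, 1 ≤ f ∧ ρ.st f ∈ M.R
  · obtain ⟨f, hf1, hfR⟩ := hex
    have hexn : ∃ n, 1 ≤ n ∧ ρ.st n ∈ M.R := ⟨f, hf1, hfR⟩
    classical
    refine ⟨Nat.find hexn, (Nat.find_spec hexn).1, (Nat.find_spec hexn).2, ?_⟩
    exact (levels_avoid M d ρ.st ρ.ac h0 hs (Nat.find hexn) (Nat.find_spec hexn).1
      (fun i h1 h2 => fun hiR => Nat.find_min hexn h2 ⟨h1, hiR⟩)).2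
  · exfalso
    push_neg at hex
    obtain ⟨m, hm⟩ := sums_unbounded M hdec ρ.st ρ.ac hv M.cap
    have hm1 : 1 ≤ m := by
      rcases Nat.eq_zero_or_pos m with h | h
      · subst h; simp at hm
      · exact h
    have := (levels_avoid M d ρ.st ρ.ac h0 hs m hm1
      (fun i h1 _ => hex i h1)).2
    omega

lemma hist_eq_of_agree (ρ₁ ρ₂ : Run S A) (j : ℕ)
    (h : ∀ i < j, ρ₁.st i = ρ₂.st i ∧ ρ₁.ac i = ρ₂.ac i) :
    hist ρ₁ j = hist ρ₂ j := by
  unfold hist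
  apply List.map_congr_left
  intro i hi
  rw [List.mem_range] at hi
  rw [(h i hi).1, (h i hi).2]

lemma hist_add (ρ ρ' : Run S A) (f i : ℕ)
    (hst : ∀ j, ρ.st (f + j) = ρ'.st j) (hac : ∀ j, ρ.ac (f + j) = ρ'.ac j) :
    hist ρ (f + i) = hist ρ f ++ hist ρ' i := by
  unfold hist
  rw [List.range_add, List.map_append, List.map_map]
  congr 1
  apply List.map_congr_left
  intro a ha
  simp only [Function.comp_apply]
  rw [hst, hac]

lemma shift_safe (σ : Strat S A) (d : ℕ) (t : S)
    (hall : AllSafe M σ t d) (ρ : Run S A) (hc : Compatible M σ d ρ) (h0 : ρ.st 0 = t)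
    (f : ℕ) (hf : ρ.st f ∈ M.R) :
    ∃ σ', AllSafe M σ' (ρ.st f) M.cap := by
  refine ⟨fun _ h s => σ d (hist ρ f ++ h) s, ?_⟩
  intro ρ' hc' h0'
  set ρ'' : Run S A := ⟨fun j => if j < f then ρ.st j else ρ'.st (j - f),
                        fun j => if j < f then ρ.ac j else ρ'.ac (j - f)⟩ with hρ''
  have hst_shift : ∀ j, ρ''.st (f + j) = ρ'.st j := by
    intro j; simp only [hρ'']; rw [if_neg (by omega)]; congr 1; omega
  have hac_shift : ∀ j, ρ''.ac (f + j) = ρ'.ac j := by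
    intro j; simp only [hρ'']; rw [if_neg (by omega)]; congr 1; omega
  have hst_small : ∀ j ≤ f, ρ''.st j = ρ.st j := by
    intro j hj
    rcases Nat.lt_or_ge j f with h | h
    · simp only [hρ'']; rw [if_pos h]
    · have hjf : j = f := by omega
      subst hjf
      have h2 := hst_shift 0
      rw [Nat.add_zero] at h2
      rw [h2, h0']
  have hac_small : ∀ j < f, ρ''.ac j = ρ.ac j := by
    intro j hj; simp only [hρ'']; rw [if_pos hj]
  have hhist_small : ∀ j ≤ f, hist ρ'' j = hist ρ j := by
    intro j hj
    exact hist_eq_of_agree ρ'' ρ j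
      (fun i hi => ⟨hst_small i (by omega), hac_small i (by omega)⟩)
  have hhist_shift : ∀ i, hist ρ'' (f + i) = hist ρ f ++ hist ρ' i := by
    intro i
    rw [← hhist_small f le_rfl]
    exact hist_add ρ'' ρ' f i hst_shift hac_shift
  have hcomp : Compatible M σ d ρ'' := by
    intro i
    rcases Nat.lt_or_ge i f with h | h
    · constructor
      · rw [hac_small i h, hhist_small i (le_of_lt h), hst_small i (le_of_lt h)]
        exact (hc i).1
      · rw [hac_small i h, hst_small i (le_of_lt h), hst_small (i+1) (by omega)]
        exact (hc i).2
    · obtain ⟨j, rfl⟩ : ∃ j, i = f + j := ⟨i - f, by omega⟩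
      constructor
      · rw [hac_shift j, hhist_shift j, hst_shift j]
        exact (hc' j).1
      · have h1 : f + j + 1 = f + (j + 1) := by omega
        rw [hac_shift j, hst_shift j, h1, hst_shift (j+1)]
        exact (hc' j).2
  have hst0 : ρ''.st 0 = t := by
    rw [hst_small 0 (Nat.zero_le f), h0]
  have hsafe'' : SafeRun M d ρ'' := hall ρ'' hcomp hst0
  -- transfer levels
  have hlev : ∀ i, 1 ≤ i →
      levels M M.cap ρ'.st ρ'.ac i = levels M d ρ''.st ρ''.ac (f + i) := by
    intro i
    induction i with
    | zero => omega
    | succ i ih =>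
        intro _
        rcases Nat.eq_zero_or_pos i with hi | hi
        · subst hi
          obtain ⟨l, hl⟩ := Option.ne_none_iff_exists'.1 (hsafe'' f)
          have hR0 : ρ'.st 0 ∈ M.R := by rw [h0']; exact hf
          have e1 : levels M M.cap ρ'.st ρ'.ac 1
              = M.nextLevel (ρ'.st 0) (ρ'.ac 0) (some M.cap) := rfl
          have e2 : levels M d ρ''.st ρ''.ac (f + 1)
              = M.nextLevel (ρ''.st f) (ρ''.ac f) (levels M d ρ''.st ρ''.ac f) := rfl
          have hstf : ρ''.st f = ρ'.st 0 := by
            have := hst_shift 0; simpa using this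
          have hacf : ρ''.ac f = ρ'.ac 0 := by
            have := hac_shift 0; simpa using this
          rw [e1, e2, hl, hstf, hacf, nextLevel, nextLevel, if_pos hR0, if_pos hR0]
        · have h1 : f + (i + 1) = (f + i) + 1 := by omega
          have e1 : levels M M.cap ρ'.st ρ'.ac (i+1)
              = M.nextLevel (ρ'.st i) (ρ'.ac i) (levels M M.cap ρ'.st ρ'.ac i) := rfl
          have e2 : levels M d ρ''.st ρ''.ac ((f + i) + 1)
              = M.nextLevel (ρ''.st (f+i)) (ρ''.ac (f+i)) (levels M d ρ''.st ρ''.ac (f+i)) := rfl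
          rw [h1, e1, e2, ih hi, hst_shift i, hac_shift i]
  intro i
  rcases Nat.eq_zero_or_pos i with hi | hi
  · subst hi; simp [levels]
  · rw [hlev i hi]
    exact hsafe'' (f + i)

end Aux

end CMDP

open CMDP in
/-- in the iterative removal of unusable reload states
(`R'₀ = R`, `R'_{i+1} = R'_i ∖ {r ∈ R'_i : ml(Reach⁺_{R'_i})(r) > cap}`), every
removed reload state admits no strategy keeping all runs safe even when loaded
with `cap`. -/
theorem stmt15 {S A : Type} [Fintype S] [Fintype A] [DecidableEq S] [DecidableEq A]
    (M : CMDP S A) (hdec : Decreasing M)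
    (mlp : Finset S → (S → ℕ∞))
    (hmlp : ∀ R' : Finset S, IsML (SatVec M (NRReachPlus M R')) (mlp R')) :
    ∀ i : ℕ, ∀ t ∈ M.R,
      t ∉ (Nat.rec (motive := fun _ => Finset S) M.R
            (fun _ Ri => Ri.filter (fun r => mlp Ri r ≤ (M.cap : ℕ∞))) i) →
      ¬ ∃ σ : Strat S A, AllSafe M σ t M.cap := by
  set Rseq : ℕ → Finset S := fun i => Nat.rec (motive := fun _ => Finset S) M.R
    (fun _ Ri => Ri.filter (fun r => mlp Ri r ≤ (M.cap : ℕ∞))) i with hRseq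
  have hsucc : ∀ i, Rseq (i+1) = (Rseq i).filter (fun r => mlp (Rseq i) r ≤ (M.cap : ℕ∞)) :=
    fun i => rfl
  intro i
  induction i with
  | zero => intro t ht hnt; exact absurd ht hnt
  | succ i ih =>
      intro t ht hnt
      have hnt' : t ∉ (Rseq i).filter (fun r => mlp (Rseq i) r ≤ (M.cap : ℕ∞)) := hnt
      by_cases hmem : t ∈ Rseq i
      · have hcap : ¬ mlp (Rseq i) t ≤ (M.cap : ℕ∞) :=
          fun h => hnt' (Finset.mem_filter.2 ⟨hmem, h⟩)
        rintro ⟨σ, hσ⟩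
        have hsat : SatVec M (NRReachPlus M (Rseq i))
            (fun s => if s = t then (M.cap : ℕ∞) else ⊤) := by
          refine ⟨σ, ?_⟩
          intro s d hd
          replace hd : (if s = t then (M.cap : ℕ∞) else ⊤) = (d : ℕ∞) := hd
          by_cases hs : s = t
          · rw [if_pos hs] at hd
            have hdc : d = M.cap := by
              have := (Nat.cast_injective (R := ℕ∞)) hd.symm
              omega
            subst hs; subst hdc
            intro ρ hcρ h0ρ
            have hsafe : SafeRun M M.cap ρ := hσ ρ hcρ h0ρ
            have h0R : ρ.st 0 ∈ M.R := by rw [h0ρ]; exact ht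
            obtain ⟨f, hf1, hfR, hfsum⟩ := safe_reach M hdec σ M.cap ρ hcρ h0R hsafe
            refine ⟨f, hf1, ?_, hfsum⟩
            by_contra hfRi
            obtain ⟨σ', hσ'⟩ := shift_safe M σ M.cap s hσ ρ hcρ h0ρ f hfR
            exact ih (ρ.st f) hfR hfRi ⟨σ', hσ'⟩
          · rw [if_neg hs] at hd
            exact absurd hd.symm (ENat.coe_ne_top d)
        have hle := (hmlp (Rseq i)).2 _ hsat t
        rw [if_pos rfl] at hle
        exact hcap hle
      · exact ih t ht hmem
end
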